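/- Let q ∈ S = ℂ[x₁,…,xₙ] be a nonzero linear form and let H = {b ∈ ℂⁿ : q(b) = 0}. Identify order-1 operators (derivations) with vectors (c₁,…,cₙ) ∈ Sⁿ acting by θ(f) = Σᵢ cᵢ ∂f/∂xᵢ. Then: (a) the S-module N = {θ : θ(q) = 0} of derivations annihilating q equals the S-submodule of Sⁿ generated by the constant vectors b ∈ H; (b) if δ is any derivation with δ(q) = a·q for some nonzero a ∈ ℂ, then D^(1)(q) = N + S·δ. -/

import Mathlib

open MvPolynomial

noncomputable section

/-- The polynomial ring `S = ℂ[x₁,…,xₙ]`. -/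
abbrev S (n : ℕ) : Type := MvPolynomial (Fin n) ℂ

/-- The action of a derivation `c = (c₁,…,cₙ) ∈ Sⁿ` on a polynomial:
`c(f) = Σᵢ cᵢ ∂f/∂xᵢ`. -/
def applyDer {n : ℕ} (c : Fin n → S n) (f : S n) : S n :=
  ∑ i, c i * pderiv i f

/-- `D^(1)(p)`: the `S`-submodule of `Sⁿ` of derivations preserving `⟨p⟩`. -/
def D1 {n : ℕ} (p : S n) : Submodule (S n) (Fin n → S n) where
  carrier := {c | ∀ f ∈ Ideal.span {p}, applyDer c f ∈ Ideal.span {p}}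
  add_mem' := by
    intro a b ha hb f hf
    have : applyDer (a + b) f = applyDer a f + applyDer b f := by
      simp [applyDer, add_mul, Finset.sum_add_distrib]
    rw [this]; exact Ideal.add_mem _ (ha f hf) (hb f hf)
  zero_mem' := by
    intro f hf
    have : applyDer (0 : Fin n → S n) f = 0 := by simp [applyDer]
    rw [this]; exact Ideal.zero_mem _
  smul_mem' := by
    intro s c hc f hf
    have : applyDer (s • c) f = s * applyDer c f := by
      simp [applyDer, Finset.mul_sum, mul_assoc]
    rw [this]; exact Ideal.mul_mem_left _ _ (hc f hf)

/-- The `S`-module of derivations annihilating a fixed polynomial `q`. -/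
def AnnMod {n : ℕ} (q : S n) : Submodule (S n) (Fin n → S n) where
  carrier := {c | applyDer c q = 0}
  add_mem' := by
    intro a b ha hb
    have : applyDer (a + b) q = applyDer a q + applyDer b q := by
      simp [applyDer, add_mul, Finset.sum_add_distrib]
    simp_all
  zero_mem' := by simp [applyDer]
  smul_mem' := by
    intro s c hc
    have : applyDer (s • c) q = s * applyDer c q := by
      simp [applyDer, Finset.mul_sum, mul_assoc]
    simp_all

/-- The constant vector of `Sⁿ` associated to `b ∈ ℂⁿ`. -/
def constVec {n : ℕ} (b : Fin n → ℂ) : Fin n → S n := fun i => C (b i)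

lemma finsupp_degree_one {σ : Type*} (m : σ →₀ ℕ) (h : Finsupp.degree m = 1) :
    ∃ i, m = Finsupp.single i 1 := by
  have hne : m.support.Nonempty := by
    rcases m.support.eq_empty_or_nonempty with he | he
    · exfalso
      have : m = 0 := Finsupp.support_eq_empty.mp he
      simp [this] at h
    · exact he
  obtain ⟨i, hi⟩ := hne
  have h1 : ∀ j ∈ m.support, 1 ≤ m j := fun j hj =>
    Nat.one_le_iff_ne_zero.mpr (Finsupp.mem_support_iff.mp hj)
  have hcard : m.support.card * 1 ≤ ∑ j ∈ m.support, m j := by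
    simpa using Finset.card_nsmul_le_sum m.support m 1 h1
  rw [show (∑ j ∈ m.support, m j) = Finsupp.degree m from rfl, h] at hcard
  have hcard1 : m.support.card = 1 := le_antisymm (by omega) (Finset.card_pos.mpr ⟨i, hi⟩)
  obtain ⟨j, hj⟩ := Finset.card_eq_one.mp hcard1
  have hmj : m = Finsupp.single j (m j) := (Finsupp.support_eq_singleton.mp hj).2
  have : m j = 1 := by
    have : Finsupp.degree m = m j := by
      rw [Finsupp.degree_apply, hj, Finset.sum_singleton]
    omega
  exact ⟨j, by rw [hmj, this]⟩

lemma degree_single_one {σ : Type*} (j : σ) : Finsupp.degree (Finsupp.single j 1) = 1 := by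
  classical
  rw [Finsupp.degree_apply, Finsupp.support_single_ne_zero j one_ne_zero, Finset.sum_singleton,
    Finsupp.single_eq_same]

lemma repr_lin {n : ℕ} (q : S n) (hlin : q.IsHomogeneous 1) :
    q = ∑ j, C (coeff (Finsupp.single j 1) q) * X j := by
  ext m
  rw [coeff_sum]
  by_cases hm : Finsupp.degree m = 1
  · obtain ⟨i, rfl⟩ := finsupp_degree_one m hm
    rw [Finset.sum_eq_single i]
    · simp [coeff_C_mul, coeff_X']
    · intro j _ hji
      rw [coeff_C_mul, coeff_X']
      rw [if_neg, mul_zero]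
      intro hEq
      exact hji (by simpa using (Finsupp.single_left_inj one_ne_zero).mp hEq)
    · intro h; exact absurd (Finset.mem_univ i) h
  · rw [hlin.coeff_eq_zero hm]
    refine (Finset.sum_eq_zero fun j _ => ?_).symm
    rw [coeff_C_mul, coeff_X', if_neg, mul_zero]
    intro hEq
    exact hm (by rw [← hEq]; exact degree_single_one j)

lemma pderiv_lin {n : ℕ} (q : S n) (hlin : q.IsHomogeneous 1) (i : Fin n) :
    pderiv i q = C (coeff (Finsupp.single i 1) q) := by
  conv_lhs => rw [repr_lin q hlin]
  rw [map_sum, Finset.sum_eq_single i]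
  · simp
  · intro j _ hji; simp [pderiv_X_of_ne hji]
  · intro h; exact absurd (Finset.mem_univ i) h

lemma applyDer_lin {n : ℕ} (q : S n) (hlin : q.IsHomogeneous 1) (c : Fin n → S n) :
    applyDer c q = ∑ i, c i * C (coeff (Finsupp.single i 1) q) := by
  unfold applyDer
  exact Finset.sum_congr rfl fun i _ => by rw [pderiv_lin q hlin]

lemma eval_lin {n : ℕ} (q : S n) (hlin : q.IsHomogeneous 1) (b : Fin n → ℂ) :
    eval b q = ∑ i, coeff (Finsupp.single i 1) q * b i := by
  conv_lhs => rw [repr_lin q hlin]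
  simp

lemma applyDer_mul {n : ℕ} (c : Fin n → S n) (g f : S n) :
    applyDer c (g * f) = g * applyDer c f + f * applyDer c g := by
  unfold applyDer
  rw [Finset.mul_sum, Finset.mul_sum, ← Finset.sum_add_distrib]
  refine Finset.sum_congr rfl fun i _ => ?_
  rw [pderiv_mul]; ring

/-- Let `q` be a nonzero linear form and `H = {b ∈ ℂⁿ : q(b) = 0}`.
(a) The module `N` of derivations annihilating `q` is the `S`-submodule of `Sⁿ`
generated by the constant vectors `b ∈ H`. (b) If `δ` is a derivation with
`δ(q) = a·q`, `a ∈ ℂ*`, then `D^(1)(q) = N + S·δ`. -/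
theorem annihilator_span_and_D1_decomp {n : ℕ} (q : S n)
    (hq : q ≠ 0) (hlin : q.IsHomogeneous 1) :
    AnnMod q = Submodule.span (S n)
      (constVec '' {b : Fin n → ℂ | eval b q = 0}) ∧
    ∀ (δ : Fin n → S n) (a : ℂ), a ≠ 0 → applyDer δ q = C a * q →
      D1 q = AnnMod q ⊔ Submodule.span (S n) {δ} := by
  set co : Fin n → ℂ := fun i => coeff (Finsupp.single i 1) q with hco
  constructor
  · apply le_antisymm
    · -- AnnMod ≤ span
      intro c hc
      have hc0 : ∑ i, c i * C (co i) = 0 := by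
        rw [← applyDer_lin q hlin]; exact hc
      have hk : ∃ k, co k ≠ 0 := by
        by_contra h
        push_neg at h
        apply hq
        rw [repr_lin q hlin]
        exact Finset.sum_eq_zero fun j _ => by rw [show coeff (Finsupp.single j 1) q = co j from rfl, h j, map_zero, zero_mul]
      obtain ⟨k, hk⟩ := hk
      set v : Fin n → Fin n → ℂ :=
        fun i j => (if j = i then 1 else 0) - co i * (co k)⁻¹ * (if j = k then 1 else 0) with hv
      have hveval : ∀ i, eval (v i) q = 0 := by
        intro i
        rw [eval_lin q hlin]
        simp only [hv, mul_sub, mul_ite, mul_one, mul_zero, Finset.sum_sub_distrib,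
          Finset.sum_ite_eq', Finset.mem_univ, if_true]
        rw [show (co k) * (co i * (co k)⁻¹) = co i * ((co k)⁻¹ * co k) by ring,
          inv_mul_cancel₀ hk, mul_one, sub_self]
      have key : c = ∑ i, c i • constVec (v i) := by
        funext j
        rw [Finset.sum_apply]
        simp only [Pi.smul_apply, smul_eq_mul, constVec]
        have h1 : ∀ i, c i * C (v i j) =
            c i * C (if j = i then (1:ℂ) else 0) -
            (c i * C (co i)) * (C ((co k)⁻¹) * C (if j = k then (1:ℂ) else 0)) := by
          intro i
          simp only [hv, map_sub, map_mul]
          ring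
        rw [Finset.sum_congr rfl fun i _ => h1 i, Finset.sum_sub_distrib, ← Finset.sum_mul,
          hc0, zero_mul, sub_zero]
        simp [apply_ite (C : ℂ → S n), mul_ite, Finset.sum_ite_eq']
      rw [key]
      exact Submodule.sum_mem _ fun i _ => Submodule.smul_mem _ _
        (Submodule.subset_span ⟨v i, hveval i, rfl⟩)
    · -- span ≤ AnnMod
      rw [Submodule.span_le]
      rintro _ ⟨b, hb, rfl⟩
      show applyDer (constVec b) q = 0
      rw [applyDer_lin q hlin]
      have : ∑ i, constVec b i * C (co i) = C (∑ i, co i * b i) := by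
        rw [map_sum]
        exact Finset.sum_congr rfl fun i _ => by rw [constVec, map_mul, mul_comm]
      rw [this, ← eval_lin q hlin b, hb, map_zero]
  · -- part (b)
    intro δ a ha hδ
    have mem_D1 : ∀ c : Fin n → S n, applyDer c q ∈ Ideal.span {q} → c ∈ D1 q := by
      intro c h f hf
      obtain ⟨g, hg⟩ := Ideal.mem_span_singleton'.mp hf
      rw [← hg, applyDer_mul]
      exact Ideal.add_mem _ (Ideal.mul_mem_left _ g h)
        (Ideal.mul_mem_right _ _ (Ideal.mem_span_singleton_self q))
    apply le_antisymm
    · intro c hc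
      have h := hc q (Ideal.subset_span rfl)
      obtain ⟨g, hg⟩ := Ideal.mem_span_singleton'.mp h
      have h1 : c - (g * C a⁻¹) • δ ∈ AnnMod q := by
        show applyDer (c - (g * C a⁻¹) • δ) q = 0
        have hlinear : applyDer (c - (g * C a⁻¹) • δ) q =
            applyDer c q - (g * C a⁻¹) * applyDer δ q := by
          simp [applyDer, sub_mul, Finset.sum_sub_distrib, Finset.mul_sum, mul_assoc]
        rw [hlinear, hδ, ← hg,
          show g * C a⁻¹ * (C a * q) = g * q * C (a⁻¹ * a) by rw [map_mul]; ring,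
          inv_mul_cancel₀ ha, map_one, mul_one, sub_self]
      have hdecomp : c = (c - (g * C a⁻¹) • δ) + (g * C a⁻¹) • δ := by abel
      rw [hdecomp]
      exact Submodule.add_mem _ (Submodule.mem_sup_left h1)
        (Submodule.mem_sup_right (Submodule.smul_mem _ _ (Submodule.mem_span_singleton_self δ)))
    · rw [sup_le_iff]
      constructor
      · intro c hc
        exact mem_D1 c (by rw [show applyDer c q = 0 from hc]; exact Ideal.zero_mem _)
      · rw [Submodule.span_le]
        rintro x hx
        rw [Set.mem_singleton_iff] at hx
        subst hx
        exact mem_D1 x (by rw [hδ]; exact Ideal.mul_mem_left _ _ (Ideal.mem_span_singleton_self q))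

end
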